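/- Let φ_σ be the N(0, σ²) density with σ ≤ π. For 0 < s ≤ π and 0 ≤ d < min{s, π − s}, define the alternating series S = φ_σ(d) − φ_σ(s) + Σ_{k=1}^∞ [φ_σ(kπ − s) − φ_σ(kπ − d) − φ_σ(kπ + d) + φ_σ(kπ + s)]. Then S > 0 whenever d ≠ s. -/

import Mathlib

open Real

/-- The N(0, σ²) density. -/
noncomputable def gaussDensity (σ t : ℝ) : ℝ :=
  (Real.sqrt (2 * π) * σ)⁻¹ * Real.exp (-t ^ 2 / (2 * σ ^ 2))



/-- key exp bound: exp(1/2) ≥ 13/8 -/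
lemma exp_half_ge : (13:ℝ)/8 ≤ Real.exp (1/2) := by
  have h1 : Real.exp (1/2) * Real.exp (1/2) = Real.exp 1 := by
    rw [← Real.exp_add]; norm_num
  have h2 := Real.exp_one_gt_d9
  have h3 := Real.exp_pos (1/2 : ℝ)
  nlinarith

/-- Key inequality 1: for 0 < t < π and σ ≤ π,
(π+t) e^{-(π+t)²/2σ²} < t e^{-t²/2σ²} + (π-t) e^{-(π-t)²/2σ²}. -/
lemma key1 {σ t : ℝ} (hσ0 : 0 < σ) (hσ : σ ≤ π) (ht0 : 0 < t) (ht : t < π) :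
    (π + t) * Real.exp (-(π + t)^2 / (2*σ^2)) <
      t * Real.exp (-t^2 / (2*σ^2)) + (π - t) * Real.exp (-(π - t)^2 / (2*σ^2)) := by
  have hπ := Real.pi_pos
  have hσ2 : (0:ℝ) < 2*σ^2 := by positivity
  set q : ℝ := (2*σ^2)⁻¹ with hq_def
  have hq0 : 0 < q := by positivity
  have hq : 1 ≤ 2*π^2*q := by
    rw [hq_def, ← div_eq_mul_inv, le_div_iff₀ hσ2]
    nlinarith
  have hdiv : ∀ x : ℝ, -x^2/(2*σ^2) = -(x^2*q) := by
    intro x; rw [hq_def]; field_simp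
  rw [hdiv, hdiv, hdiv]
  -- write the two larger exponentials relative to the smallest
  have e1 : Real.exp (-(t^2*q)) = Real.exp (-((π+t)^2*q)) * Real.exp ((π^2 + 2*π*t)*q) := by
    rw [← Real.exp_add]; congr 1; ring
  have e2 : Real.exp (-((π-t)^2*q)) = Real.exp (-((π+t)^2*q)) * Real.exp ((4*π*t)*q) := by
    rw [← Real.exp_add]; congr 1; ring
  rw [e1, e2]
  have hC := Real.exp_pos (-((π+t)^2*q))
  have hmain : π + t < t * Real.exp ((π^2 + 2*π*t)*q) + (π - t) * Real.exp ((4*π*t)*q) := by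
    have hA0 : 0 ≤ (π^2 + 2*π*t)*q := by positivity
    have eA : (13:ℝ)/8 * (1/2 + (π^2 + 2*π*t)*q) ≤ Real.exp ((π^2 + 2*π*t)*q) := by
      have h1 : Real.exp ((π^2 + 2*π*t)*q) = Real.exp (1/2) * Real.exp ((π^2 + 2*π*t)*q - 1/2) := by
        rw [← Real.exp_add]; congr 1; ring
      have h2 := Real.add_one_le_exp ((π^2 + 2*π*t)*q - 1/2)
      have h3 := exp_half_ge
      have h4 : (0:ℝ) ≤ (π^2 + 2*π*t)*q - 1/2 + 1 := by linarith
      calc (13:ℝ)/8 * (1/2 + (π^2 + 2*π*t)*q)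
          = 13/8 * ((π^2 + 2*π*t)*q - 1/2 + 1) := by ring
        _ ≤ Real.exp (1/2) * Real.exp ((π^2 + 2*π*t)*q - 1/2) := by
            apply mul_le_mul h3 h2 h4 (Real.exp_pos _).le
        _ = Real.exp ((π^2 + 2*π*t)*q) := h1.symm
    have eB : 1 + (4*π*t)*q ≤ Real.exp ((4*π*t)*q) := by
      have := Real.add_one_le_exp ((4*π*t)*q); linarith
    -- now purely polynomial
    have h5 : 0 ≤ π - t := by linarith
    have hqt : 0 ≤ (2*π^2*q - 1) * (t * (45/8*π - 3/4*t)) := by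
      apply mul_nonneg (by linarith)
      apply mul_nonneg ht0.le
      nlinarith
    nlinarith [mul_le_mul_of_nonneg_left eA ht0.le, mul_le_mul_of_nonneg_left eB h5,
      mul_pos hπ ht0, mul_pos hq0 ht0]
  nlinarith [mul_lt_mul_of_pos_left hmain hC]

lemma gauss_pos {σ : ℝ} (hσ0 : 0 < σ) (x : ℝ) : 0 < gaussDensity σ x := by
  unfold gaussDensity
  have h1 : 0 < Real.sqrt (2*π) := Real.sqrt_pos.mpr (by positivity)
  positivity

lemma key2 {σ a b : ℝ} (hσ0 : 0 < σ) (ha : σ ≤ a) (hab : a ≤ b) :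
    b * Real.exp (-b^2 / (2*σ^2)) ≤ a * Real.exp (-a^2 / (2*σ^2)) := by
  have ha0 : 0 < a := lt_of_lt_of_le hσ0 ha
  have hσ2 : (0:ℝ) < 2*σ^2 := by positivity
  set y : ℝ := (b^2 - a^2)/(2*σ^2) with hy_def
  have hy0 : 0 ≤ y := by
    apply div_nonneg _ hσ2.le; nlinarith
  have hy_mul : y * (2*σ^2) = b^2 - a^2 := div_mul_cancel₀ _ hσ2.ne'
  have e1 : Real.exp (-b^2 / (2*σ^2)) = Real.exp (-a^2 / (2*σ^2)) * Real.exp (-y) := by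
    rw [← Real.exp_add]; congr 1; rw [hy_def]; field_simp; ring
  rw [e1]
  have hD := Real.exp_pos (-a^2 / (2*σ^2))
  have hkey : b * Real.exp (-y) ≤ a := by
    rw [Real.exp_neg, ← div_eq_mul_inv, div_le_iff₀ (Real.exp_pos _)]
    have h2 := Real.add_one_le_exp y
    have hσa : σ^2 ≤ a^2 := by nlinarith
    have h3 : b ≤ a * (1 + y) := by
      nlinarith [mul_nonneg (sub_nonneg.mpr hσa) hy0, sq_nonneg (a - b),
        mul_pos ha0 ha0]
    nlinarith [Real.exp_pos y, mul_le_mul_of_nonneg_left h2 ha0.le]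
  nlinarith

lemma hasDerivAt_gauss (σ x : ℝ) :
    HasDerivAt (fun t => gaussDensity σ t)
      ((Real.sqrt (2 * π) * σ)⁻¹ * (Real.exp (-x ^ 2 / (2 * σ ^ 2)) * (-(2*x) / (2 * σ ^ 2)))) x := by
  have h1 : HasDerivAt (fun t : ℝ => -t^2 / (2*σ^2)) (-(2*x) / (2*σ^2)) x := by
    have h := ((hasDerivAt_pow 2 x).neg).div_const (2*σ^2)
    simpa using h
  have h2 := h1.exp
  have h3 := h2.const_mul ((Real.sqrt (2 * π) * σ)⁻¹)
  exact h3

lemma hasDerivAt_gauss_sub (σ a x : ℝ) :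
    HasDerivAt (fun t => gaussDensity σ (a - t))
      (-((Real.sqrt (2 * π) * σ)⁻¹ * (Real.exp (-(a-x) ^ 2 / (2 * σ ^ 2)) * (-(2*(a-x)) / (2 * σ ^ 2))))) x := by
  have hi : HasDerivAt (fun t : ℝ => a - t) (-1) x := (hasDerivAt_id x).const_sub a
  have h := (hasDerivAt_gauss σ (a - x)).comp x hi
  simpa [Function.comp_def] using h

lemma hasDerivAt_gauss_add (σ a x : ℝ) :
    HasDerivAt (fun t => gaussDensity σ (a + t))
      ((Real.sqrt (2 * π) * σ)⁻¹ * (Real.exp (-(a+x) ^ 2 / (2 * σ ^ 2)) * (-(2*(a+x)) / (2 * σ ^ 2)))) x := by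
  have hi : HasDerivAt (fun t : ℝ => a + t) 1 x := (hasDerivAt_id x).const_add a
  have h := (hasDerivAt_gauss σ (a + x)).comp x hi
  simpa [Function.comp_def] using h

lemma F1_strictAnti {σ : ℝ} (hσ0 : 0 < σ) (hσ : σ ≤ π) :
    StrictAntiOn (fun t => gaussDensity σ t - gaussDensity σ (π - t) - gaussDensity σ (π + t))
      (Set.Icc 0 π) := by
  have hdiff : ∀ x : ℝ, HasDerivAt
      (fun t => gaussDensity σ t - gaussDensity σ (π - t) - gaussDensity σ (π + t))
      (((Real.sqrt (2 * π) * σ)⁻¹ * (Real.exp (-x ^ 2 / (2 * σ ^ 2)) * (-(2*x) / (2 * σ ^ 2))) -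
        -((Real.sqrt (2 * π) * σ)⁻¹ * (Real.exp (-(π-x) ^ 2 / (2 * σ ^ 2)) * (-(2*(π-x)) / (2 * σ ^ 2))))) -
        (Real.sqrt (2 * π) * σ)⁻¹ * (Real.exp (-(π+x) ^ 2 / (2 * σ ^ 2)) * (-(2*(π+x)) / (2 * σ ^ 2)))) x :=
    fun x => ((hasDerivAt_gauss σ x).sub (hasDerivAt_gauss_sub σ π x)).sub (hasDerivAt_gauss_add σ π x)
  apply strictAntiOn_of_deriv_neg (convex_Icc 0 π)
  · exact Continuous.continuousOn (by
      exact continuous_iff_continuousAt.mpr fun x => (hdiff x).differentiableAt.continuousAt)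
  · intro x hx
    rw [interior_Icc] at hx
    rw [(hdiff x).deriv]
    have K := key1 hσ0 hσ hx.1 hx.2
    have hpos : 0 < (Real.sqrt (2 * π) * σ)⁻¹ * (2*σ^2)⁻¹ := by
      have h1 : 0 < Real.sqrt (2*π) := Real.sqrt_pos.mpr (by positivity)
      positivity
    have h2 := mul_lt_mul_of_pos_left K hpos
    ring_nf at h2 ⊢
    linarith

lemma h_mono {σ m : ℝ} (hσ0 : 0 < σ) (hσ : σ ≤ π) (hm : 2*π ≤ m) :
    MonotoneOn (fun t => gaussDensity σ (m - t) + gaussDensity σ (m + t)) (Set.Icc 0 π) := by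
  have hdiff : ∀ x : ℝ, HasDerivAt
      (fun t => gaussDensity σ (m - t) + gaussDensity σ (m + t))
      (-((Real.sqrt (2 * π) * σ)⁻¹ * (Real.exp (-(m-x) ^ 2 / (2 * σ ^ 2)) * (-(2*(m-x)) / (2 * σ ^ 2)))) +
        (Real.sqrt (2 * π) * σ)⁻¹ * (Real.exp (-(m+x) ^ 2 / (2 * σ ^ 2)) * (-(2*(m+x)) / (2 * σ ^ 2)))) x :=
    fun x => (hasDerivAt_gauss_sub σ m x).add (hasDerivAt_gauss_add σ m x)
  apply monotoneOn_of_deriv_nonneg (convex_Icc 0 π)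
  · exact Continuous.continuousOn (by
      exact continuous_iff_continuousAt.mpr fun x => (hdiff x).differentiableAt.continuousAt)
  · intro x hx
    exact (hdiff x).differentiableAt.differentiableWithinAt
  · intro x hx
    rw [interior_Icc] at hx
    rw [(hdiff x).deriv]
    have hπ := Real.pi_pos
    have K : (m+x) * Real.exp (-(m+x)^2 / (2*σ^2)) ≤ (m-x) * Real.exp (-(m-x)^2 / (2*σ^2)) := by
      apply key2 hσ0 (by linarith [hx.2]) (by linarith [hx.1])
    have hpos : 0 < (Real.sqrt (2 * π) * σ)⁻¹ * (2*σ^2)⁻¹ := by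
      have h1 : 0 < Real.sqrt (2*π) := Real.sqrt_pos.mpr (by positivity)
      positivity
    have h2 := mul_le_mul_of_nonneg_left K hpos.le
    ring_nf at h2 ⊢
    linarith

lemma summable_gauss_aux {σ : ℝ} (hσ0 : 0 < σ) (t : ℕ → ℝ) (ht : ∀ k : ℕ, (k : ℝ) * π ≤ t k) :
    Summable fun k => gaussDensity σ (t k) := by
  have hπ := Real.pi_pos
  have hσ2 : (0:ℝ) < 2*σ^2 := by positivity
  set c : ℝ := (Real.sqrt (2 * π) * σ)⁻¹ with hc_def
  have hc : 0 < c := by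
    have h1 : 0 < Real.sqrt (2*π) := Real.sqrt_pos.mpr (by positivity)
    positivity
  set r : ℝ := Real.exp (-π^2 / (2*σ^2)) with hr_def
  have hr0 : 0 < r := Real.exp_pos _
  have hr1 : r < 1 := by
    rw [hr_def, Real.exp_lt_one_iff]
    apply div_neg_of_neg_of_pos (by nlinarith) hσ2
  apply Summable.of_nonneg_of_le (fun k => (gauss_pos hσ0 (t k)).le) _
    ((summable_geometric_of_lt_one hr0.le hr1).mul_left c)
  intro k
  show gaussDensity σ (t k) ≤ c * r ^ k
  have htk0 : 0 ≤ t k := le_trans (by positivity) (ht k)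
  have hsq : (k:ℝ)^2 * π^2 ≤ (t k)^2 := by
    have h1 := mul_self_le_mul_self (show (0:ℝ) ≤ (k:ℝ)*π by positivity) (ht k)
    nlinarith [h1]
  have hk2 : (k:ℝ) ≤ (k:ℝ)^2 := by
    have : k ≤ k^2 := Nat.le_self_pow (by norm_num) k
    exact_mod_cast this
  have harg : -(t k)^2 / (2*σ^2) ≤ (k:ℝ) * (-π^2 / (2*σ^2)) := by
    rw [← mul_div_assoc, div_le_div_iff_of_pos_right hσ2]
    nlinarith [mul_le_mul_of_nonneg_right hk2 (sq_nonneg π)]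
  have hexp : Real.exp (-(t k)^2 / (2*σ^2)) ≤ r ^ k := by
    rw [hr_def, ← Real.exp_nat_mul]
    exact Real.exp_le_exp.mpr harg
  calc gaussDensity σ (t k) = c * Real.exp (-(t k)^2 / (2*σ^2)) := by
        rw [hc_def]; unfold gaussDensity; ring_nf
    _ ≤ c * r ^ k := by
        exact mul_le_mul_of_nonneg_left hexp hc.le

/-- with σ ≤ π, 0 < s ≤ π, 0 ≤ d < min{s, π − s}, the alternating series
S = φ_σ(d) − φ_σ(s) + Σ_{k≥1} [φ_σ(kπ − s) − φ_σ(kπ − d) − φ_σ(kπ + d) + φ_σ(kπ + s)]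
is strictly positive whenever d ≠ s. -/
theorem stmt17 (σ s d : ℝ) (hσ0 : 0 < σ) (hσ : σ ≤ π)
    (hs0 : 0 < s) (hs : s ≤ π) (hd0 : 0 ≤ d) (hd : d < min s (π - s)) (hne : d ≠ s) :
    0 < gaussDensity σ d - gaussDensity σ s +
      ∑' k : ℕ,
        (gaussDensity σ ((k + 1) * π - s) - gaussDensity σ ((k + 1) * π - d) -
          gaussDensity σ ((k + 1) * π + d) + gaussDensity σ ((k + 1) * π + s)) := by
  have hπ := Real.pi_pos
  have hds : d < s := lt_of_lt_of_le hd (min_le_left _ _)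
  have hdps : d < π - s := lt_of_lt_of_le hd (min_le_right _ _)
  have hsπ : s < π := by linarith
  have hdπ : d < π := by linarith
  -- summability of the four pieces
  have S1 : Summable fun k : ℕ => gaussDensity σ (((k : ℝ) + 1) * π - s) :=
    summable_gauss_aux hσ0 _ (fun k => by nlinarith [Nat.cast_nonneg (α := ℝ) k])
  have S2 : Summable fun k : ℕ => gaussDensity σ (((k : ℝ) + 1) * π - d) :=
    summable_gauss_aux hσ0 _ (fun k => by nlinarith [Nat.cast_nonneg (α := ℝ) k])
  have S3 : Summable fun k : ℕ => gaussDensity σ (((k : ℝ) + 1) * π + d) :=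
    summable_gauss_aux hσ0 _ (fun k => by nlinarith [Nat.cast_nonneg (α := ℝ) k])
  have S4 : Summable fun k : ℕ => gaussDensity σ (((k : ℝ) + 1) * π + s) :=
    summable_gauss_aux hσ0 _ (fun k => by nlinarith [Nat.cast_nonneg (α := ℝ) k])
  have hsum : Summable fun k : ℕ =>
      gaussDensity σ (((k : ℝ) + 1) * π - s) - gaussDensity σ (((k : ℝ) + 1) * π - d) -
        gaussDensity σ (((k : ℝ) + 1) * π + d) + gaussDensity σ (((k : ℝ) + 1) * π + s) :=
    ((S1.sub S2).sub S3).add S4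
  -- the sum is at least its 0-th term
  have hterm : ∀ j : ℕ, j ≠ 0 →
      0 ≤ gaussDensity σ (((j : ℝ) + 1) * π - s) - gaussDensity σ (((j : ℝ) + 1) * π - d) -
        gaussDensity σ (((j : ℝ) + 1) * π + d) + gaussDensity σ (((j : ℝ) + 1) * π + s) := by
    intro j hj
    have hj1 : (1 : ℝ) ≤ (j : ℝ) := by exact_mod_cast Nat.one_le_iff_ne_zero.mpr hj
    have hm : 2 * π ≤ ((j : ℝ) + 1) * π := by nlinarith
    have := h_mono hσ0 hσ hm (Set.mem_Icc.mpr ⟨hd0, hdπ.le⟩)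
      (Set.mem_Icc.mpr ⟨hs0.le, hs⟩) hds.le
    simp only [] at this
    linarith
  have h0le : (gaussDensity σ ((((0:ℕ) : ℝ) + 1) * π - s) - gaussDensity σ ((((0:ℕ) : ℝ) + 1) * π - d) -
        gaussDensity σ ((((0:ℕ) : ℝ) + 1) * π + d) + gaussDensity σ ((((0:ℕ) : ℝ) + 1) * π + s)) ≤
      ∑' k : ℕ, (gaussDensity σ (((k : ℝ) + 1) * π - s) - gaussDensity σ (((k : ℝ) + 1) * π - d) -
        gaussDensity σ (((k : ℝ) + 1) * π + d) + gaussDensity σ (((k : ℝ) + 1) * π + s)) :=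
    Summable.le_tsum hsum 0 hterm
  have e0 : (((0:ℕ) : ℝ) + 1) * π = π := by norm_num
  rw [e0] at h0le
  -- head + first term > 0 via strict antitonicity of F₁
  have key0 := F1_strictAnti hσ0 hσ (Set.mem_Icc.mpr ⟨hd0, hdπ.le⟩)
    (Set.mem_Icc.mpr ⟨hs0.le, hs⟩) hds
  simp only [] at key0
  linarith [h0le, key0]
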